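/- Let R be a ring. If every acyclic complex of injective right R-modules is totally acyclic, then every acyclic complex of flat left R-modules is F-totally acyclic. -/

import Mathlib

noncomputable section

open LinearMap MulOpposite TensorProduct

/-- A (doubly infinite, cohomologically indexed) complex of `R`-modules. -/
structure Cx (R : Type) [Ring R] where
  X : ℤ → ModuleCat.{0} R
  d : ∀ n : ℤ, X n →ₗ[R] X (n + 1)
  dd : ∀ n : ℤ, (d (n + 1)).comp (d n) = 0

namespace Cx

variable {R : Type} [Ring R]

/-- The complex is exact (acyclic) everywhere. -/
def Acyclic (C : Cx R) : Prop :=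
  ∀ n : ℤ, LinearMap.range (C.d n) = LinearMap.ker (C.d (n + 1))

/-- Exactness of the induced complex `Hom_R(C, M)`. -/
def HomOutExact (C : Cx R) (M : ModuleCat.{0} R) : Prop :=
  ∀ (n : ℤ) (f : C.X (n + 1) →ₗ[R] M), f.comp (C.d n) = 0 →
    ∃ g : C.X (n + 1 + 1) →ₗ[R] M, g.comp (C.d (n + 1)) = f

/-- Exactness of the induced complex `Hom_R(J, C)`. -/
def HomInExact (C : Cx R) (J : ModuleCat.{0} R) : Prop :=
  ∀ (n : ℤ) (f : J →ₗ[R] C.X (n + 1)), (C.d (n + 1)).comp f = 0 →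
    ∃ g : J →ₗ[R] C.X n, (C.d n).comp g = f

end Cx

section Tensor

variable (R : Type) [Ring R]

/-- The defining relations of the tensor product `E ⊗_R M` of a right `R`-module `E`
and a left `R`-module `M`, inside `E ⊗_ℤ M`. -/
def ncRel (E : ModuleCat.{0} Rᵐᵒᵖ) (M : ModuleCat.{0} R) :
    Submodule ℤ (TensorProduct ℤ E M) :=
  Submodule.span ℤ
    {x | ∃ (r : R) (e : E) (m : M), x = (op r • e) ⊗ₜ[ℤ] m - e ⊗ₜ[ℤ] (r • m)}

/-- The tensor product `E ⊗_R M` of a right `R`-module and a left `R`-module. -/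
abbrev NCT (E : ModuleCat.{0} Rᵐᵒᵖ) (M : ModuleCat.{0} R) : Type :=
  TensorProduct ℤ E M ⧸ ncRel R E M

/-- Functoriality of `E ⊗_R -` in the left module argument. -/
def tmapR (E : ModuleCat.{0} Rᵐᵒᵖ) {M N : ModuleCat.{0} R} (f : M →ₗ[R] N) :
    NCT R E M →ₗ[ℤ] NCT R E N :=
  Submodule.mapQ _ _
    (TensorProduct.map LinearMap.id f.toAddMonoidHom.toIntLinearMap) (by
      rw [ncRel, Submodule.span_le]
      rintro x ⟨r, e, m, rfl⟩
      show (op r • e) ⊗ₜ[ℤ] (f m) - e ⊗ₜ[ℤ] (f (r • m)) ∈ ncRel R E N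
      rw [f.map_smul]
      exact Submodule.subset_span ⟨r, e, f m, rfl⟩)

/-- Functoriality of `- ⊗_R M` in the right module argument. -/
def tmapL {A B : ModuleCat.{0} Rᵐᵒᵖ} (g : A →ₗ[Rᵐᵒᵖ] B) (M : ModuleCat.{0} R) :
    NCT R A M →ₗ[ℤ] NCT R B M :=
  Submodule.mapQ _ _
    (TensorProduct.map g.toAddMonoidHom.toIntLinearMap LinearMap.id) (by
      rw [ncRel, Submodule.span_le]
      rintro x ⟨r, e, m, rfl⟩
      have key : TensorProduct.map g.toAddMonoidHom.toIntLinearMap (LinearMap.id (R := ℤ) (M := M))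
          ((op r • e) ⊗ₜ[ℤ] m - e ⊗ₜ[ℤ] (r • m)) = (op r • g e) ⊗ₜ[ℤ] m - g e ⊗ₜ[ℤ] (r • m) := by
        rw [map_sub, TensorProduct.map_tmul, TensorProduct.map_tmul]
        simp only [LinearMap.id_coe, id_eq, AddMonoidHom.coe_toIntLinearMap,
          LinearMap.toAddMonoidHom_coe, g.map_smul]
      have h2 : (op r • g e) ⊗ₜ[ℤ] m - g e ⊗ₜ[ℤ] (r • m) ∈ ncRel R B M :=
        Submodule.subset_span ⟨r, g e, m, rfl⟩
      rw [← key] at h2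
      exact h2)

end Tensor

/-- Exactness of the induced complex `E ⊗_R C` for a complex `C` of left `R`-modules. -/
def Cx.TensorExact {R : Type} [Ring R] (C : Cx R) (E : ModuleCat.{0} Rᵐᵒᵖ) : Prop :=
  ∀ n : ℤ, LinearMap.range (tmapR R E (C.d n)) = LinearMap.ker (tmapR R E (C.d (n + 1)))

section Tensor2

variable (R : Type) [Ring R]

/-- A left `R`-module `M` is flat if `- ⊗_R M` preserves injections of right modules. -/
def IsFlat (M : ModuleCat.{0} R) : Prop :=
  ∀ (A B : ModuleCat.{0} Rᵐᵒᵖ) (g : A →ₗ[Rᵐᵒᵖ] B),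
    Function.Injective g → Function.Injective (tmapL R g M)

/-- A right `R`-module `E` is flat if `E ⊗_R -` preserves injections of left modules. -/
def IsFlatR (E : ModuleCat.{0} Rᵐᵒᵖ) : Prop :=
  ∀ (M N : ModuleCat.{0} R) (f : M →ₗ[R] N),
    Function.Injective f → Function.Injective (tmapR R E f)

end Tensor2

section Dims

variable (R : Type) [Ring R]

/-- `M` has injective dimension at most `n`. -/
def InjDimLE (M : ModuleCat.{0} R) (n : ℕ) : Prop :=
  ∃ (E : ℕ → ModuleCat.{0} R) (d : ∀ i, E i →ₗ[R] E (i + 1)) (ε : M →ₗ[R] E 0),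
    (∀ i, Module.Injective R (E i)) ∧ Function.Injective ε ∧
    LinearMap.range ε = LinearMap.ker (d 0) ∧
    (∀ i, LinearMap.range (d i) = LinearMap.ker (d (i + 1))) ∧
    (∀ i, n < i → Subsingleton (E i))

/-- `M` has projective dimension at most `n`. -/
def ProjDimLE (M : ModuleCat.{0} R) (n : ℕ) : Prop :=
  ∃ (P : ℕ → ModuleCat.{0} R) (d : ∀ i, P (i + 1) →ₗ[R] P i) (ε : P 0 →ₗ[R] M),
    (∀ i, Module.Projective R (P i)) ∧ Function.Surjective ε ∧
    LinearMap.range (d 0) = LinearMap.ker ε ∧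
    (∀ i, LinearMap.range (d (i + 1)) = LinearMap.ker (d i)) ∧
    (∀ i, n < i → Subsingleton (P i))

/-- The left `R`-module `M` has flat dimension at most `n`. -/
def FlatDimLE (M : ModuleCat.{0} R) (n : ℕ) : Prop :=
  ∃ (F : ℕ → ModuleCat.{0} R) (d : ∀ i, F (i + 1) →ₗ[R] F i) (ε : F 0 →ₗ[R] M),
    (∀ i, IsFlat R (F i)) ∧ Function.Surjective ε ∧
    LinearMap.range (d 0) = LinearMap.ker ε ∧
    (∀ i, LinearMap.range (d (i + 1)) = LinearMap.ker (d i)) ∧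
    (∀ i, n < i → Subsingleton (F i))

/-- The right `R`-module `E` has flat dimension at most `n` (as a right module). -/
def FlatDimRLE (E : ModuleCat.{0} Rᵐᵒᵖ) (n : ℕ) : Prop :=
  ∃ (F : ℕ → ModuleCat.{0} Rᵐᵒᵖ) (d : ∀ i, F (i + 1) →ₗ[Rᵐᵒᵖ] F i) (ε : F 0 →ₗ[Rᵐᵒᵖ] E),
    (∀ i, IsFlatR R (F i)) ∧ Function.Surjective ε ∧
    LinearMap.range (d 0) = LinearMap.ker ε ∧
    (∀ i, LinearMap.range (d (i + 1)) = LinearMap.ker (d i)) ∧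
    (∀ i, n < i → Subsingleton (F i))

end Dims

section Conditions

variable (R : Type) [Ring R]

/-- Every acyclic complex of projective left `R`-modules is totally acyclic. -/
def AllProjTotAc : Prop :=
  ∀ C : Cx R, C.Acyclic → (∀ n, Module.Projective R (C.X n)) →
    ∀ M : ModuleCat.{0} R, Module.Projective R M → C.HomOutExact M

/-- Every acyclic complex of injective left `R`-modules is totally acyclic. -/
def AllInjTotAc : Prop :=
  ∀ C : Cx R, C.Acyclic → (∀ n, Module.Injective R (C.X n)) →
    ∀ J : ModuleCat.{0} R, Module.Injective R J → C.HomInExact J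

/-- Every acyclic complex of flat left `R`-modules is F-totally acyclic. -/
def AllFlatFTotAc : Prop :=
  ∀ C : Cx R, C.Acyclic → (∀ n, IsFlat R (C.X n)) →
    ∀ E : ModuleCat.{0} Rᵐᵒᵖ, Module.Injective Rᵐᵒᵖ E → C.TensorExact E

/-- Every acyclic complex of projective left `R`-modules is F-totally acyclic. -/
def AllProjFTotAc : Prop :=
  ∀ C : Cx R, C.Acyclic → (∀ n, Module.Projective R (C.X n)) →
    ∀ E : ModuleCat.{0} Rᵐᵒᵖ, Module.Injective Rᵐᵒᵖ E → C.TensorExact E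

end Conditions

section Gorenstein

variable (R : Type) [Ring R]

/-- `M` is Gorenstein projective: a cycle of a totally acyclic complex of projectives. -/
def IsGProj (M : ModuleCat.{0} R) : Prop :=
  ∃ (C : Cx R) (n : ℤ), C.Acyclic ∧ (∀ k, Module.Projective R (C.X k)) ∧
    (∀ Q : ModuleCat.{0} R, Module.Projective R Q → C.HomOutExact Q) ∧
    Nonempty (M ≃ₗ[R] LinearMap.ker (C.d n))

/-- `M` is Gorenstein injective: a cycle of a totally acyclic complex of injectives. -/
def IsGInj (M : ModuleCat.{0} R) : Prop :=
  ∃ (C : Cx R) (n : ℤ), C.Acyclic ∧ (∀ k, Module.Injective R (C.X k)) ∧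
    (∀ J : ModuleCat.{0} R, Module.Injective R J → C.HomInExact J) ∧
    Nonempty (M ≃ₗ[R] LinearMap.ker (C.d n))

/-- `M` is Gorenstein flat: a cycle of an F-totally acyclic complex of flats. -/
def IsGFlat (M : ModuleCat.{0} R) : Prop :=
  ∃ (C : Cx R) (n : ℤ), C.Acyclic ∧ (∀ k, IsFlat R (C.X k)) ∧
    (∀ E : ModuleCat.{0} Rᵐᵒᵖ, Module.Injective Rᵐᵒᵖ E → C.TensorExact E) ∧
    Nonempty (M ≃ₗ[R] LinearMap.ker (C.d n))

end Gorenstein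

section CharM

/-- The character group `Hom_ℤ(M, ℚ/ℤ)`. -/
abbrev CharM (M : Type) [AddCommGroup M] : Type := M →+ AddCircle (1 : ℚ)

/-- The character module of a left module is a right module. -/
instance charModuleOp (S : Type) [Ring S] (M : Type) [AddCommGroup M] [Module S M] :
    Module Sᵐᵒᵖ (CharM M) where
  smul s f := f.comp (DistribMulAction.toAddMonoidHom M s.unop)
  one_smul f := by apply AddMonoidHom.ext; intro m; show f ((1 : S) • m) = f m; rw [one_smul]
  mul_smul s t f := by
    apply AddMonoidHom.ext; intro m
    show f (((s * t).unop) • m) = f (t.unop • s.unop • m)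
    rw [MulOpposite.unop_mul, mul_smul]
  smul_zero s := by apply AddMonoidHom.ext; intro m; rfl
  smul_add s f g := by apply AddMonoidHom.ext; intro m; rfl
  add_smul s t f := by
    apply AddMonoidHom.ext; intro m
    show f (((s + t).unop) • m) = f (s.unop • m) + f (t.unop • m)
    rw [MulOpposite.unop_add, add_smul, map_add]
  zero_smul f := by
    apply AddMonoidHom.ext; intro m
    show f ((0 : S) • m) = 0
    rw [zero_smul, map_zero]

/-- The character module of a right module is a left module. -/
instance charModuleLeft (S : Type) [Ring S] (M : Type) [AddCommGroup M] [Module Sᵐᵒᵖ M] :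
    Module S (CharM M) where
  smul s f := f.comp (DistribMulAction.toAddMonoidHom M (op s))
  one_smul f := by
    apply AddMonoidHom.ext; intro m
    show f ((op (1 : S)) • m) = f m
    rw [op_one, one_smul]
  mul_smul s t f := by
    apply AddMonoidHom.ext; intro m
    show f ((op (s * t)) • m) = f (op t • op s • m)
    rw [op_mul, mul_smul]
  smul_zero s := by apply AddMonoidHom.ext; intro m; rfl
  smul_add s f g := by apply AddMonoidHom.ext; intro m; rfl
  add_smul s t f := by
    apply AddMonoidHom.ext; intro m
    show f ((op (s + t)) • m) = f (op s • m) + f (op t • m)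
    rw [op_add, add_smul, map_add]
  zero_smul f := by
    apply AddMonoidHom.ext; intro m
    show f ((op (0 : S)) • m) = 0
    rw [op_zero, zero_smul, map_zero]

end CharM

section Ext

variable (R : Type) [Ring R]

/-- `Ext^1_R(F, M) = 0`, phrased as: every extension of `F` by `M` splits. -/
def Ext1Zero (F M : ModuleCat.{0} R) : Prop :=
  ∀ (X : ModuleCat.{0} R) (i : M →ₗ[R] X) (p : X →ₗ[R] F),
    Function.Injective i → Function.Surjective p →
    LinearMap.range i = LinearMap.ker p →
    ∃ s : F →ₗ[R] X, p.comp s = LinearMap.id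

/-- `Ext^k_R(M, N) = 0` (for `k ≥ 1`), phrased via vanishing of the `k`-th cohomology of
`Hom_R(P_•, N)` for every (augmented) projective resolution `⋯ → Q (i+1) → Q i → ⋯ → Q 0 ≅ M`. -/
def ExtVanish (k : ℕ) (M N : ModuleCat.{0} R) : Prop :=
  ∀ (Q : ℕ → ModuleCat.{0} R) (g : ∀ i, Q (i + 1) →ₗ[R] Q i),
    (∀ i, Module.Projective R (Q (i + 1))) → Function.Surjective (g 0) →
    (∀ i, LinearMap.range (g (i + 1)) = LinearMap.ker (g i)) →
    Nonempty (M ≃ₗ[R] Q 0) →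
    ∀ f : Q (k + 1) →ₗ[R] N, f.comp (g (k + 1)) = 0 →
      ∃ h : Q k →ₗ[R] N, h.comp (g k) = f

end Ext

section Stmt4Aux

open Submodule

/-- The circle group `ℚ/ℤ`. -/
abbrev QZ : Type := AddCircle (1 : ℚ)

/-- Characters extend along injective maps, since `ℚ/ℤ` is an injective `ℤ`-module. -/
lemma char_extend {A B : Type} [AddCommGroup A] [AddCommGroup B]
    (f : A →ₗ[ℤ] B) (hf : Function.Injective f) (φ : A →+ QZ) :
    ∃ ψ : B →+ QZ, ∀ a, ψ (f a) = φ a := by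
  obtain ⟨ψ, hψ⟩ := CharacterModule.dual_surjective_of_injective f hf φ
  exact ⟨ψ, fun a => DFunLike.congr_fun hψ a⟩

/-- Characters detect membership in the range of a map. -/
lemma char_detect {A B : Type} [AddCommGroup A] [AddCommGroup B]
    (f : A →ₗ[ℤ] B) (x : B)
    (hx : ∀ φ : B →+ QZ, (∀ a, φ (f a) = 0) → φ x = 0) :
    x ∈ LinearMap.range f := by
  by_contra hmem
  have h0 : (Submodule.Quotient.mk x : B ⧸ LinearMap.range f) ≠ 0 := by
    simpa [Submodule.Quotient.mk_eq_zero] using hmem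
  obtain ⟨c, hc⟩ := CharacterModule.exists_character_apply_ne_zero_of_ne_zero h0
  refine hc ?_
  have := hx ((c : (B ⧸ LinearMap.range f) →+ QZ).comp
      (LinearMap.range f).mkQ.toAddMonoidHom) (fun a => ?_)
  · exact this
  · show c (Submodule.Quotient.mk (f a)) = 0
    rw [show (Submodule.Quotient.mk (f a) : B ⧸ LinearMap.range f) = 0 by
      rw [Submodule.Quotient.mk_eq_zero]; exact LinearMap.mem_range_self f a]
    exact map_zero _

/-- A character vanishing on the range of `f` factors through `g`, for `range f = ker g`. -/
lemma char_factor {A B C : Type} [AddCommGroup A] [AddCommGroup B] [AddCommGroup C]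
    (f : A →ₗ[ℤ] B) (g : B →ₗ[ℤ] C) (hfg : LinearMap.range f = LinearMap.ker g)
    (φ : B →+ QZ) (hφ : ∀ a, φ (f a) = 0) :
    ∃ ψ : C →+ QZ, ∀ b, ψ (g b) = φ b := by
  have hker : LinearMap.ker g ≤ LinearMap.ker φ.toIntLinearMap := by
    rw [← hfg]; rintro _ ⟨a, rfl⟩; exact hφ a
  set φ' : (B ⧸ LinearMap.ker g) →ₗ[ℤ] QZ := Submodule.liftQ (LinearMap.ker g)
    φ.toIntLinearMap hker with hφ'
  set q := g.quotKerEquivRange with hq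
  set χ : LinearMap.range g →ₗ[ℤ] QZ := φ' ∘ₗ (q.symm : LinearMap.range g →ₗ[ℤ] _) with hχ
  obtain ⟨ψ, hψ⟩ := char_extend (LinearMap.range g).subtype Subtype.val_injective
    χ.toAddMonoidHom
  refine ⟨ψ, fun b => ?_⟩
  have h1 : ψ (g b) = φ' (q.symm ⟨g b, LinearMap.mem_range_self g b⟩) :=
    hψ ⟨g b, LinearMap.mem_range_self g b⟩
  have h2 : q (Submodule.Quotient.mk b) = ⟨g b, LinearMap.mem_range_self g b⟩ := by
    ext; simp [hq, LinearMap.quotKerEquivRange]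
  have h3 : q.symm ⟨g b, LinearMap.mem_range_self g b⟩ = Submodule.Quotient.mk b := by
    rw [← h2, LinearEquiv.symm_apply_apply]
  rw [h1, h3]
  rfl

end Stmt4Aux

section Stmt4Infra

variable {R : Type} [Ring R]

namespace Cx

/-- Transport along an equality of indices. -/
def e (C : Cx R) {a b : ℤ} (h : a = b) : C.X a →ₗ[R] C.X b :=
  Eq.rec (motive := fun b _ => C.X a →ₗ[R] C.X b) LinearMap.id h

lemma e_self (C : Cx R) {a : ℤ} (h : a = a) (x : C.X a) : C.e h x = x := rfl

lemma e_e (C : Cx R) {a b c : ℤ} (h : a = b) (h' : b = c) (x : C.X a) :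
    C.e h' (C.e h x) = C.e (h.trans h') x := by subst h; subst h'; rfl

lemma e_d (C : Cx R) {a b : ℤ} (h : a = b) {h' : a + 1 = b + 1} (x : C.X a) :
    C.e h' (C.d a x) = C.d b (C.e h x) := by subst h; rfl

lemma d_d (C : Cx R) (n : ℤ) (x : C.X n) : C.d (n + 1) (C.d n x) = 0 := by
  simpa using LinearMap.congr_fun (C.dd n) x

end Cx

/-- The dual of a module map, as a map of character modules over the opposite ring. -/
def dualL {M N : Type} [AddCommGroup M] [AddCommGroup N] [Module R M] [Module R N]
    (f : M →ₗ[R] N) : CharM N →ₗ[Rᵐᵒᵖ] CharM M where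
  toFun φ := φ.comp f.toAddMonoidHom
  map_add' φ ψ := by ext m; rfl
  map_smul' s φ := by
    ext m
    show φ (MulOpposite.unop s • f m) = φ (f (MulOpposite.unop s • m))
    rw [f.map_smul]

/-- Composition of duals of a composite-zero pair is zero. -/
lemma dualL_comp_zero {M N P : Type} [AddCommGroup M] [AddCommGroup N] [AddCommGroup P]
    [Module R M] [Module R N] [Module R P]
    (f : M →ₗ[R] N) (g : N →ₗ[R] P) (h : ∀ x, g (f x) = 0) :
    (dualL f).comp (dualL (R := R) g) = 0 := by
  apply LinearMap.ext; intro φ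
  ext m
  show φ (g (f m)) = 0
  rw [h, map_zero]

/-- The dual complex of character modules. -/
def dualCx (C : Cx R) : Cx Rᵐᵒᵖ where
  X n := ModuleCat.of Rᵐᵒᵖ (CharM (C.X (-n)))
  d n := dualL ((C.e (show -(n+1)+1 = -n by ring)) ∘ₗ C.d (-(n+1)))
  dd n := by
    refine dualL_comp_zero (R := R) ((C.e (show -(n+1+1)+1 = -(n+1) by ring)) ∘ₗ C.d (-(n+1+1)))
      ((C.e (show -(n+1)+1 = -n by ring)) ∘ₗ C.d (-(n+1))) fun x => ?_
    simp only [LinearMap.coe_comp, Function.comp_apply]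
    rw [← C.e_d (show -(n+1+1)+1 = -(n+1) by ring)
      (h' := show -(n+1+1)+1+1 = -(n+1)+1 by ring) (C.d (-(n+1+1)) x)]
    rw [C.d_d]
    simp

/-- Exactness transfers to transported differentials. -/
lemma Cx.eD_exact (C : Cx R) (hC : C.Acyclic) {a b c : ℤ} (hab : a + 1 = b) (hbc : b + 1 = c) :
    LinearMap.range ((C.e hab) ∘ₗ C.d a) = LinearMap.ker ((C.e hbc) ∘ₗ C.d b) := by
  subst hab; subst hbc
  ext x
  simp only [LinearMap.mem_range, LinearMap.mem_ker, LinearMap.coe_comp, Function.comp_apply,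
    Cx.e_self]
  constructor
  · rintro ⟨y, rfl⟩
    have : C.d a y ∈ LinearMap.ker (C.d (a+1)) := hC a ▸ LinearMap.mem_range_self _ y
    exact this
  · intro hx
    have : x ∈ LinearMap.range (C.d a) := by
      rw [hC a]; exact hx
    exact this

/-- Dualizing an exact pair yields an exact pair. -/
lemma dual_exact {M N P : Type} [AddCommGroup M] [AddCommGroup N] [AddCommGroup P]
    [Module R M] [Module R N] [Module R P]
    (f : M →ₗ[R] N) (g : N →ₗ[R] P) (hfg : LinearMap.range f = LinearMap.ker g) :
    LinearMap.range (dualL g) = LinearMap.ker (dualL (R := R) f) := by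
  ext φ
  simp only [LinearMap.mem_range, LinearMap.mem_ker]
  constructor
  · rintro ⟨ψ, rfl⟩
    ext m
    show ψ (g (f m)) = 0
    have hm : f m ∈ LinearMap.ker g := hfg ▸ LinearMap.mem_range_self f m
    rw [LinearMap.mem_ker] at hm
    rw [hm, map_zero]
  · intro hφ
    have hfg' : LinearMap.range f.toAddMonoidHom.toIntLinearMap
        = LinearMap.ker g.toAddMonoidHom.toIntLinearMap := by
      ext x
      constructor
      · rintro ⟨y, rfl⟩
        show g (f y) = 0
        have hm : f y ∈ LinearMap.ker g := hfg ▸ LinearMap.mem_range_self f y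
        exact hm
      · intro hx
        have : x ∈ LinearMap.ker g := hx
        rw [← hfg] at this
        obtain ⟨y, hy⟩ := this
        exact ⟨y, hy⟩
    obtain ⟨ψ, hψ⟩ := char_factor f.toAddMonoidHom.toIntLinearMap g.toAddMonoidHom.toIntLinearMap
      hfg' φ (fun a => by
        have := DFunLike.congr_fun hφ a
        exact this)
    exact ⟨ψ, AddMonoidHom.ext hψ⟩

lemma dualCx_acyclic (C : Cx R) (hC : C.Acyclic) : (dualCx C).Acyclic := fun n =>
  dual_exact ((C.e (show -(n+1+1)+1 = -(n+1) by ring)) ∘ₗ C.d (-(n+1+1)))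
    ((C.e (show -(n+1)+1 = -n by ring)) ∘ₗ C.d (-(n+1)))
    (C.eD_exact hC _ _)

end Stmt4Infra

section Stmt4Tensor

variable {R : Type} [Ring R]

lemma tmapR_mk (E : ModuleCat.{0} Rᵐᵒᵖ) {M N : ModuleCat.{0} R} (f : M →ₗ[R] N)
    (a : E) (m : M) :
    tmapR R E f (Submodule.Quotient.mk (a ⊗ₜ[ℤ] m)) =
      Submodule.Quotient.mk (a ⊗ₜ[ℤ] f m) := by
  rfl

lemma tmapL_mk {A B : ModuleCat.{0} Rᵐᵒᵖ} (g : A →ₗ[Rᵐᵒᵖ] B) (M : ModuleCat.{0} R)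
    (a : A) (m : M) :
    tmapL R g M (Submodule.Quotient.mk (a ⊗ₜ[ℤ] m)) =
      Submodule.Quotient.mk (g a ⊗ₜ[ℤ] m) := by
  rfl

lemma NCT_hom_ext {E : ModuleCat.{0} Rᵐᵒᵖ} {M : ModuleCat.{0} R} {T : Type} [AddCommMonoid T]
    (φ ψ : NCT R E M →+ T)
    (h : ∀ (a : E) (m : M), φ (Submodule.Quotient.mk (a ⊗ₜ[ℤ] m)) =
      ψ (Submodule.Quotient.mk (a ⊗ₜ[ℤ] m))) : φ = ψ := by
  ext x
  obtain ⟨y, rfl⟩ := Submodule.Quotient.mk_surjective _ x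
  induction y using TensorProduct.induction_on with
  | zero => simp
  | tmul a m => exact h a m
  | add u v hu hv => rw [Submodule.Quotient.mk_add, map_add, map_add, hu, hv]

/-- The adjoint character of a map to a character module. -/
def toCharAux {E : ModuleCat.{0} Rᵐᵒᵖ} {M : ModuleCat.{0} R}
    (f : E →ₗ[Rᵐᵒᵖ] CharM M) : NCT R E M →ₗ[ℤ] QZ :=
  Submodule.liftQ _ (TensorProduct.lift
    { toFun := fun a => (f a).toIntLinearMap
      map_add' := fun a b => by ext m; show f (a + b) m = _; rw [map_add]; rfl
      map_smul' := fun n a => by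
        ext m; show f (n • a) m = n • (f a) m
        rw [map_zsmul]; rfl }) (by
    rw [ncRel, Submodule.span_le]
    rintro x ⟨r, a, m, rfl⟩
    change (TensorProduct.lift _) ((MulOpposite.op r • a) ⊗ₜ[ℤ] m - a ⊗ₜ[ℤ] (r • m)) = 0
    rw [map_sub, TensorProduct.lift.tmul, TensorProduct.lift.tmul]
    show f (MulOpposite.op r • a) m - f a (r • m) = 0
    rw [f.map_smul]
    show f a (r • m) - f a (r • m) = 0
    rw [sub_self])

lemma toCharAux_mk {E : ModuleCat.{0} Rᵐᵒᵖ} {M : ModuleCat.{0} R}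
    (f : E →ₗ[Rᵐᵒᵖ] CharM M) (a : E) (m : M) :
    toCharAux f (Submodule.Quotient.mk (a ⊗ₜ[ℤ] m)) = f a m := rfl

/-- The adjoint map of a character on the tensor product. -/
def fromCharAux {E : ModuleCat.{0} Rᵐᵒᵖ} {M : ModuleCat.{0} R}
    (φ : NCT R E M →+ QZ) : E →ₗ[Rᵐᵒᵖ] CharM M where
  toFun a :=
  { toFun := fun m => φ (Submodule.Quotient.mk (a ⊗ₜ[ℤ] m))
    map_zero' := by
      show φ (Submodule.Quotient.mk (a ⊗ₜ[ℤ] (0 : M))) = 0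
      rw [TensorProduct.tmul_zero]; simp
    map_add' := fun m m' => by
      show φ (Submodule.Quotient.mk (a ⊗ₜ[ℤ] (m + m'))) = φ _ + φ _
      rw [TensorProduct.tmul_add, Submodule.Quotient.mk_add, map_add] }
  map_add' a a' := by
    ext m
    show φ (Submodule.Quotient.mk ((a + a') ⊗ₜ[ℤ] m)) = φ _ + φ _
    rw [TensorProduct.add_tmul, Submodule.Quotient.mk_add, map_add]
  map_smul' s a := by
    ext m
    show φ (Submodule.Quotient.mk ((s • a) ⊗ₜ[ℤ] m)) =
      φ (Submodule.Quotient.mk (a ⊗ₜ[ℤ] (MulOpposite.unop s • m)))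
    congr 1
    rw [Submodule.Quotient.eq]
    exact Submodule.subset_span ⟨MulOpposite.unop s, a, m, by rw [MulOpposite.op_unop]⟩

lemma fromCharAux_apply {E : ModuleCat.{0} Rᵐᵒᵖ} {M : ModuleCat.{0} R}
    (φ : NCT R E M →+ QZ) (a : E) (m : M) :
    fromCharAux φ a m = φ (Submodule.Quotient.mk (a ⊗ₜ[ℤ] m)) := rfl

/-- The character module of a flat module is injective over the opposite ring. -/
lemma flat_char_injective (M : ModuleCat.{0} R) (hM : IsFlat R M) :
    Module.Injective Rᵐᵒᵖ (CharM M) where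
  out X Y _ _ _ _ i hi f := by
    let i' : ModuleCat.of Rᵐᵒᵖ X →ₗ[Rᵐᵒᵖ] ModuleCat.of Rᵐᵒᵖ Y := i
    have hinj : Function.Injective (tmapL R i' M) :=
      hM (ModuleCat.of Rᵐᵒᵖ X) (ModuleCat.of Rᵐᵒᵖ Y) i' hi
    obtain ⟨ψ, hψ⟩ := char_extend _ hinj
      (toCharAux (E := ModuleCat.of Rᵐᵒᵖ X) f).toAddMonoidHom
    refine ⟨fromCharAux (E := ModuleCat.of Rᵐᵒᵖ Y) ψ, fun x => ?_⟩
    ext m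
    show ψ ((tmapL R i' M) (Submodule.Quotient.mk (x ⊗ₜ[ℤ] m))) = f x m
    exact hψ (Submodule.Quotient.mk (x ⊗ₜ[ℤ] m))

lemma tmapR_dd (C : Cx R) (E : ModuleCat.{0} Rᵐᵒᵖ) (n : ℤ) (y : NCT R E (C.X n)) :
    tmapR R E (C.d (n+1)) (tmapR R E (C.d n) y) = 0 := by
  obtain ⟨t, rfl⟩ := Submodule.Quotient.mk_surjective _ y
  induction t using TensorProduct.induction_on with
  | zero => simp
  | tmul a m =>
      rw [tmapR_mk, tmapR_mk, C.d_d, TensorProduct.tmul_zero]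
      simp
  | add u v hu hv => rw [Submodule.Quotient.mk_add, map_add, map_add, hu, hv, add_zero]

end Stmt4Tensor

/-- if every acyclic complex of injective right `R`-modules is totally acyclic,
then every acyclic complex of flat left `R`-modules is F-totally acyclic. -/
theorem stmt4 (R : Type) [Ring R] (h : AllInjTotAc Rᵐᵒᵖ) : AllFlatFTotAc R := by
  intro C hC hflat E hE n
  apply le_antisymm
  · rintro x ⟨y, rfl⟩
    exact tmapR_dd C E n y
  · intro x hx
    rw [LinearMap.mem_ker] at hx
    apply char_detect
    intro φ hφ0
    have hDIE : (dualCx C).HomInExact E := h (dualCx C) (dualCx_acyclic C hC)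
      (fun k => flat_char_injective (C.X (-k)) (hflat (-k))) E hE
    set m : ℤ := -n - 2 with hm
    have h1 : -(m+1) = n+1 := by omega
    have h3 : -(m+1+1) = n := by omega
    have h4 : n+1+1 = -m := by omega
    have h5 : n+1 = -(m+1) := by omega
    let f0 : E →ₗ[Rᵐᵒᵖ] CharM (C.X (n+1)) := fromCharAux φ
    let f : E →ₗ[Rᵐᵒᵖ] CharM (C.X (-(m+1))) := (dualL (C.e h1)) ∘ₗ f0
    have hf : ((dualCx C).d (m+1)).comp f = 0 := by
      apply LinearMap.ext; intro a
      refine AddMonoidHom.ext fun x0 => ?_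
      show φ (Submodule.Quotient.mk (a ⊗ₜ[ℤ]
        (C.e h1 ((C.e (show -(m+1+1)+1 = -(m+1) by ring)) ((C.d (-(m+1+1))) x0))))) = 0
      rw [C.e_e, C.e_d h3, ← tmapR_mk]
      exact hφ0 _
    obtain ⟨g, hg⟩ := hDIE m f hf
    let g' : E →ₗ[Rᵐᵒᵖ] CharM (C.X (n+1+1)) := (dualL (C.e h4)) ∘ₗ g
    have key : AddMonoidHom.comp (toCharAux g').toAddMonoidHom
        (tmapR R E (C.d (n+1))).toAddMonoidHom = φ := by
      apply NCT_hom_ext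
      intro a z
      show toCharAux g' (tmapR R E (C.d (n+1)) (Submodule.Quotient.mk (a ⊗ₜ[ℤ] z))) =
        φ (Submodule.Quotient.mk (a ⊗ₜ[ℤ] z))
      rw [tmapR_mk]
      have hDga : dualL ((C.e (show -(m+1)+1 = -m by ring)) ∘ₗ C.d (-(m+1))) (g a) = f a :=
        LinearMap.congr_fun hg a
      have harg : C.e h4 (C.d (n+1) z)
          = C.e (show -(m+1)+1 = -m by ring) (C.d (-(m+1)) (C.e h5 z)) := by
        rw [← C.e_d h5 (h' := show (n+1)+1 = -(m+1)+1 by omega), C.e_e]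
      calc toCharAux g' (Submodule.Quotient.mk (a ⊗ₜ[ℤ] C.d (n+1) z))
          = (dualL (LinearMap.id (R := R) (M := C.X (-m))) (g a)) (C.e h4 (C.d (n+1) z)) := rfl
        _ = (dualL (LinearMap.id (R := R) (M := C.X (-m))) (g a))
              (C.e (show -(m+1)+1 = -m by ring) (C.d (-(m+1)) (C.e h5 z))) := by rw [harg]
        _ = (dualL ((C.e (show -(m+1)+1 = -m by ring)) ∘ₗ C.d (-(m+1))) (g a)) (C.e h5 z) := rfl
        _ = f a (C.e h5 z) := by rw [hDga]
        _ = f0 a (C.e h1 (C.e h5 z)) := rfl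
        _ = f0 a (C.e (h5.trans h1) z) := by rw [C.e_e]
        _ = f0 a z := by rw [C.e_self]
        _ = φ (Submodule.Quotient.mk (a ⊗ₜ[ℤ] z)) := rfl
    have hφx : (toCharAux g') ((tmapR R E (C.d (n+1))) x) = φ x :=
      DFunLike.congr_fun key x
    rw [← hφx, hx, map_zero]
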